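/- Let λ[l,t] denote the normalized Lebesgue measure on [l,t] for t > l and λ[l,l] = δ_l. A probability measure μ is an extreme point of the convex set D[l,r] if and only if μ = λ[l,t] for some t ∈ [l,r]. -/

import Mathlib

open MeasureTheory
open ENNReal

/-- `μ ∈ D[l,r]`: `μ = α·δ_l + ρ(x)dx` where `ρ` is nonnegative, nonincreasing on `[l,r]`
and vanishes outside `[l,r]` (the absolutely continuous part has total mass `1 − α`). -/
def memD (l r : ℝ) (μ : Measure ℝ) : Prop :=
  ∃ α : ℝ, 0 ≤ α ∧ α ≤ 1 ∧ ∃ ρ : ℝ → ℝ,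
    (∀ x, 0 ≤ ρ x) ∧ AntitoneOn ρ (Set.Icc l r) ∧ (∀ x ∉ Set.Icc l r, ρ x = 0) ∧
    μ = (ENNReal.ofReal α) • Measure.dirac l
          + volume.withDensity (fun x => ENNReal.ofReal (ρ x))

/-- `μ ∈ D_AC[l,r]`: `μ = ρ(x)dx` with `ρ` nonnegative, nonincreasing on `[l,r]`, vanishing
outside `[l,r]`. -/
def memDAC (l r : ℝ) (μ : Measure ℝ) : Prop :=
  ∃ ρ : ℝ → ℝ,
    (∀ x, 0 ≤ ρ x) ∧ AntitoneOn ρ (Set.Icc l r) ∧ (∀ x ∉ Set.Icc l r, ρ x = 0) ∧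
    μ = volume.withDensity (fun x => ENNReal.ofReal (ρ x))

/-- `λ[l,t]`: normalized Lebesgue measure on `[l,t]` for `l < t`, and `δ_l` for `t = l`. -/
noncomputable def lam (l t : ℝ) : Measure ℝ :=
  if l < t then (ENNReal.ofReal (t - l))⁻¹ • volume.restrict (Set.Icc l t)
  else Measure.dirac l

lemma rho_measurable {l r : ℝ} {ρ : ℝ → ℝ} (h0 : ∀ x, 0 ≤ ρ x)
    (hmono : AntitoneOn ρ (Set.Icc l r)) (hout : ∀ x ∉ Set.Icc l r, ρ x = 0) :
    Measurable ρ := by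
  apply measurable_of_Ioi
  intro s
  rcases lt_or_ge s 0 with hs | hs
  · have : ρ ⁻¹' Set.Ioi s = Set.univ := by
      ext x; simp [lt_of_lt_of_le hs (h0 x)]
    rw [this]; exact MeasurableSet.univ
  · refine Set.OrdConnected.measurableSet ?_
    constructor
    intro x hx y hy z hz
    have hxI : x ∈ Set.Icc l r := by
      by_contra h; have := hout x h; simp [this] at hx; exact absurd hx (not_lt.2 hs)
    have hyI : y ∈ Set.Icc l r := by
      by_contra h; have := hout y h; simp [this] at hy; exact absurd hy (not_lt.2 hs)
    have hzI : z ∈ Set.Icc l r := ⟨le_trans hxI.1 hz.1, le_trans hz.2 hyI.2⟩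
    exact lt_of_lt_of_le hy (hmono hzI hyI hz.2)

lemma withDensity_indicator_const {l t : ℝ} {c : ℝ} :
    volume.withDensity (fun x => ENNReal.ofReal ((Set.Icc l t).indicator (fun _ => c) x))
      = ENNReal.ofReal c • volume.restrict (Set.Icc l t) := by
  have h : (fun x => ENNReal.ofReal ((Set.Icc l t).indicator (fun _ => c) x))
      = (Set.Icc l t).indicator (fun _ => ENNReal.ofReal c) := by
    ext x
    by_cases hx : x ∈ Set.Icc l t <;> simp [hx]
  rw [h, withDensity_indicator measurableSet_Icc, withDensity_const]

lemma lam_memD {l r t : ℝ} (hlr : l ≤ r) (ht : t ∈ Set.Icc l r) : memD l r (lam l t) := by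
  rcases eq_or_lt_of_le ht.1 with h | h
  · refine ⟨1, zero_le_one, le_refl 1, fun _ => 0, fun x => le_refl 0, ?_, fun x _ => rfl, ?_⟩
    · intro x _ y _ _; exact le_refl 0
    · simp [lam, ← h, withDensity_zero]
  · refine ⟨0, le_refl 0, zero_le_one, (Set.Icc l t).indicator (fun _ => (t - l)⁻¹), ?_, ?_, ?_, ?_⟩
    · intro x
      by_cases hx : x ∈ Set.Icc l t <;>
        simp [Set.indicator_apply, hx, inv_nonneg.2 (sub_nonneg.2 (le_of_lt h))]
    · intro x hx y hy hxy
      by_cases hyt : y ∈ Set.Icc l t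
      · have hxt : x ∈ Set.Icc l t := ⟨hx.1, le_trans hxy hyt.2⟩
        simp [Set.indicator_apply, hxt, hyt]
      · simp only [Set.indicator_apply, hyt, if_neg]
        by_cases hxt : x ∈ Set.Icc l t <;>
          simp [hxt, inv_nonneg.2 (sub_nonneg.2 (le_of_lt h))]
    · intro x hx
      have : x ∉ Set.Icc l t := fun hc => hx ⟨hc.1, le_trans hc.2 ht.2⟩
      simp [Set.indicator_apply, this]
    · rw [ENNReal.ofReal_zero, zero_smul, zero_add, withDensity_indicator_const, lam, if_pos h,
        ENNReal.ofReal_inv_of_pos (sub_pos.2 h)]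

lemma eq_dirac_of_compl_null {ν : Measure ℝ} [IsProbabilityMeasure ν] {l : ℝ}
    (h : ν {l}ᶜ = 0) : ν = Measure.dirac l := by
  ext s hs
  rw [Measure.dirac_apply' _ hs]
  by_cases hl : l ∈ s
  · have h1 : ν s + ν sᶜ = 1 := by
      rw [measure_add_measure_compl hs, measure_univ]
    have h2 : ν sᶜ = 0 := by
      refine measure_mono_null ?_ h
      intro x hx
      simp only [Set.mem_compl_iff, Set.mem_singleton_iff] at *
      exact fun hxl => hx (hxl ▸ hl)
    rw [h2, add_zero] at h1
    simp [h1, Set.indicator_apply, hl]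
  · have h2 : ν s = 0 := by
      refine measure_mono_null ?_ h
      intro x hx
      simp only [Set.mem_compl_iff, Set.mem_singleton_iff]
      exact fun hxl => hl (hxl ▸ hx)
    simp [h2, Set.indicator_apply, hl]

lemma mass_one {f : ℝ → ℝ≥0∞} (h : IsProbabilityMeasure (volume.withDensity f)) :
    ∫⁻ x, f x = 1 := by
  have := h.measure_univ
  rwa [withDensity_apply _ MeasurableSet.univ, setLIntegral_univ] at this

lemma antitoneOn_eq_const_of_ae {a b c : ℝ} {f : ℝ → ℝ}
    (hf : AntitoneOn f (Set.Ioo a b))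
    (h : ∀ᵐ x, x ∈ Set.Ioo a b → f x = c) :
    ∀ x ∈ Set.Ioo a b, f x = c := by
  intro x hx
  by_contra hne
  have hN : volume {y | y ∈ Set.Ioo a b ∧ f y ≠ c} = 0 := by
    have := ae_iff.1 h
    simpa [Set.mem_Ioo, _root_.not_imp, and_assoc] using this
  rcases lt_or_gt_of_ne hne with hlt | hgt
  · have hsub : Set.Ioo x b ⊆ {y | y ∈ Set.Ioo a b ∧ f y ≠ c} := by
      intro y hy
      have hyI : y ∈ Set.Ioo a b := ⟨lt_trans hx.1 hy.1, hy.2⟩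
      exact ⟨hyI, ne_of_lt (lt_of_le_of_lt (hf hx hyI (le_of_lt hy.1)) hlt)⟩
    have h0 := measure_mono_null hsub hN
    rw [Real.volume_Ioo] at h0
    have : b - x ≤ 0 := by simpa [ENNReal.ofReal_eq_zero] using h0
    linarith [hx.2]
  · have hsub : Set.Ioo a x ⊆ {y | y ∈ Set.Ioo a b ∧ f y ≠ c} := by
      intro y hy
      have hyI : y ∈ Set.Ioo a b := ⟨hy.1, lt_trans hy.2 hx.2⟩
      exact ⟨hyI, ne_of_gt (lt_of_lt_of_le hgt (hf hyI hx (le_of_lt hy.2)))⟩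
    have h0 := measure_mono_null hsub hN
    rw [Real.volume_Ioo] at h0
    have : x - a ≤ 0 := by simpa [ENNReal.ofReal_eq_zero] using h0
    linarith [hx.1]

lemma smul_withDensity_combo {α : ℝ} (hα : 0 ≤ α) {ρ : ℝ → ℝ} (hm : Measurable ρ) :
    ENNReal.ofReal α • volume.withDensity (fun x => ENNReal.ofReal (ρ x)) =
      volume.withDensity (fun x => ENNReal.ofReal (α * ρ x)) := by
  have h1 : (fun x => ENNReal.ofReal (α * ρ x))
      = ENNReal.ofReal α • fun x => ENNReal.ofReal (ρ x) := by
    ext x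
    simp [Pi.smul_apply, smul_eq_mul, ENNReal.ofReal_mul hα]
  rw [h1, withDensity_smul _ hm.ennreal_ofReal]

lemma memD_elim_dirac {l r : ℝ} {μ : Measure ℝ} (h : memD l r μ) (hatom : μ {l} = 0) :
    ∃ ρ : ℝ → ℝ, (∀ x, 0 ≤ ρ x) ∧ AntitoneOn ρ (Set.Icc l r) ∧
      (∀ x ∉ Set.Icc l r, ρ x = 0) ∧ Measurable ρ ∧
      μ = volume.withDensity (fun x => ENNReal.ofReal (ρ x)) := by
  obtain ⟨α, hα0, hα1, ρ, h0, hmono, hout, heq⟩ := h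
  have hmeas := rho_measurable h0 hmono hout
  have hwd : volume.withDensity (fun x => ENNReal.ofReal (ρ x)) {l} = 0 := by
    rw [withDensity_apply _ (measurableSet_singleton l)]
    exact setLIntegral_measure_zero _ _ (Real.volume_singleton)
  have hdirac : (ENNReal.ofReal α • Measure.dirac l) {l} = ENNReal.ofReal α := by
    simp [Measure.smul_apply, Measure.dirac_apply' _ (measurableSet_singleton l)]
  have hμl : μ {l} = ENNReal.ofReal α := by
    rw [heq, Measure.add_apply, hwd, hdirac, add_zero]
  rw [hatom] at hμl
  refine ⟨ρ, h0, hmono, hout, hmeas, ?_⟩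
  rw [heq, ← hμl, zero_smul, zero_add]

lemma lam_extreme {l r t : ℝ} (hlr : l ≤ r) (ht : t ∈ Set.Icc l r)
    (μ₁ μ₂ : Measure ℝ) (h1 : IsProbabilityMeasure μ₁) (h2 : IsProbabilityMeasure μ₂)
    (hd1 : memD l r μ₁) (hd2 : memD l r μ₂) (α : ℝ) (hα0 : 0 < α) (hα1 : α < 1)
    (heq : lam l t = ENNReal.ofReal α • μ₁ + ENNReal.ofReal (1 - α) • μ₂) : μ₁ = μ₂ := by
  have hαne : ENNReal.ofReal α ≠ 0 := by simp [ENNReal.ofReal_eq_zero]; linarith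
  have hβne : ENNReal.ofReal (1 - α) ≠ 0 := by simp [ENNReal.ofReal_eq_zero]; linarith
  rcases eq_or_lt_of_le ht.1 with hlt | hlt
  · -- t = l : lam = dirac l
    have hlam : lam l t = Measure.dirac l := by rw [lam, if_neg (by rw [← hlt]; exact lt_irrefl l)]
    have hc : (Measure.dirac l : Measure ℝ) {l}ᶜ = 0 := by
      rw [Measure.dirac_apply' _ (measurableSet_singleton l).compl]
      simp
    rw [hlam] at heq
    have hsum : ENNReal.ofReal α * μ₁ {l}ᶜ + ENNReal.ofReal (1 - α) * μ₂ {l}ᶜ = 0 := by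
      have := congrArg (fun ν : Measure ℝ => ν {l}ᶜ) heq
      simpa [Measure.add_apply, Measure.smul_apply, smul_eq_mul, hc] using this.symm
    rw [add_eq_zero, mul_eq_zero, mul_eq_zero] at hsum
    have hμ1 : μ₁ {l}ᶜ = 0 := hsum.1.resolve_left hαne
    have hμ2 : μ₂ {l}ᶜ = 0 := hsum.2.resolve_left hβne
    rw [eq_dirac_of_compl_null hμ1, eq_dirac_of_compl_null hμ2]
  · -- l < t
    have htr := ht.2
    have hlamd : lam l t = (ENNReal.ofReal (t - l))⁻¹ • volume.restrict (Set.Icc l t) := by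
      rw [lam, if_pos hlt]
    -- lam has no atom at l
    have hatom : lam l t {l} = 0 := by
      rw [hlamd, Measure.smul_apply, Measure.restrict_apply (measurableSet_singleton l)]
      have : volume ({l} ∩ Set.Icc l t) = 0 :=
        measure_mono_null Set.inter_subset_left Real.volume_singleton
      simp [this]
    have hsum : ENNReal.ofReal α * μ₁ {l} + ENNReal.ofReal (1 - α) * μ₂ {l} = 0 := by
      have := congrArg (fun ν : Measure ℝ => ν {l}) heq
      simpa [Measure.add_apply, Measure.smul_apply, smul_eq_mul, hatom] using this.symm
    rw [add_eq_zero, mul_eq_zero, mul_eq_zero] at hsum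
    obtain ⟨ρ₁, h01, hmono1, hout1, hmeas1, heq1⟩ :=
      memD_elim_dirac hd1 (hsum.1.resolve_left hαne)
    obtain ⟨ρ₂, h02, hmono2, hout2, hmeas2, heq2⟩ :=
      memD_elim_dirac hd2 (hsum.2.resolve_left hβne)
    set g : ℝ → ℝ := fun x => α * ρ₁ x + (1 - α) * ρ₂ x with hg_def
    have hg0 : ∀ x, 0 ≤ g x := fun x =>
      add_nonneg (mul_nonneg (le_of_lt hα0) (h01 x))
        (mul_nonneg (by linarith) (h02 x))
    have hgmeas : Measurable g := ((measurable_const.mul hmeas1).add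
      (measurable_const.mul hmeas2))
    have hlamg : lam l t = volume.withDensity (fun x => ENNReal.ofReal (g x)) := by
      rw [heq, heq1, heq2, smul_withDensity_combo (le_of_lt hα0) hmeas1,
        smul_withDensity_combo (by linarith : (0:ℝ) ≤ 1 - α) hmeas2,
        ← withDensity_add_left (show Measurable fun x => α * ρ₁ x from measurable_const.mul hmeas1).ennreal_ofReal]
      congr 1
      ext x
      simp [hg_def, ENNReal.ofReal_add (mul_nonneg (le_of_lt hα0) (h01 x))
        (mul_nonneg (by linarith : (0:ℝ) ≤ 1 - α) (h02 x))]
    set ind : ℝ → ℝ := (Set.Icc l t).indicator (fun _ => (t - l)⁻¹) with hind_def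
    have hlami : lam l t = volume.withDensity (fun x => ENNReal.ofReal (ind x)) := by
      rw [withDensity_indicator_const, hlamd, ENNReal.ofReal_inv_of_pos (sub_pos.2 hlt)]
    have hindmeas : Measurable ind := measurable_const.indicator measurableSet_Icc
    have hae : (fun x => ENNReal.ofReal (g x)) =ᵐ[volume] fun x => ENNReal.ofReal (ind x) := by
      rw [← withDensity_eq_iff_of_sigmaFinite hgmeas.ennreal_ofReal.aemeasurable
        hindmeas.ennreal_ofReal.aemeasurable, ← hlamg, ← hlami]
    have hind0 : ∀ x, 0 ≤ ind x := by
      intro x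
      by_cases hx : x ∈ Set.Icc l t <;>
        simp [hind_def, Set.indicator_apply, hx, inv_nonneg.2 (sub_nonneg.2 (le_of_lt hlt))]
    have haeR : ∀ᵐ x, g x = ind x := by
      filter_upwards [hae] with x hx
      exact (ENNReal.ofReal_eq_ofReal_iff (hg0 x) (hind0 x)).1 hx
    -- g antitone on Icc l r
    have hgmono : AntitoneOn g (Set.Icc l r) := by
      intro x hx y hy hxy
      have := hmono1 hx hy hxy
      have := hmono2 hx hy hxy
      simp only [hg_def]
      nlinarith
    -- g = (t-l)⁻¹ on Ioo l t
    have hgc : ∀ x ∈ Set.Ioo l t, g x = (t - l)⁻¹ := by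
      refine antitoneOn_eq_const_of_ae (hgmono.mono ?_) ?_
      · intro x hx; exact ⟨le_of_lt hx.1, le_trans (le_of_lt hx.2) htr⟩
      · filter_upwards [haeR] with x hx hxI
        rw [hx, hind_def, Set.indicator_of_mem (Set.mem_Icc.mpr ⟨le_of_lt hxI.1, le_of_lt hxI.2⟩)]
    -- g = 0 on Ioo t r
    have hgz : ∀ x ∈ Set.Ioo t r, g x = 0 := by
      refine antitoneOn_eq_const_of_ae (hgmono.mono ?_) ?_
      · intro x hx; exact ⟨le_trans (le_of_lt hlt) (le_of_lt hx.1), le_of_lt hx.2⟩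
      · filter_upwards [haeR] with x hx hxI
        rw [hx, hind_def, Set.indicator_of_notMem (fun hc => absurd hc.2 (not_le.2 hxI.1))]
    -- on Ioo t r both densities vanish
    have hz1 : ∀ x ∈ Set.Ioo t r, ρ₁ x = 0 ∧ ρ₂ x = 0 := by
      intro x hx
      have hgx := hgz x hx
      have ha := mul_nonneg (le_of_lt hα0) (h01 x)
      have hb := mul_nonneg (by linarith : (0:ℝ) ≤ 1 - α) (h02 x)
      have h1' : α * ρ₁ x = 0 := by simp only [hg_def] at hgx; linarith
      have h2' : (1 - α) * ρ₂ x = 0 := by simp only [hg_def] at hgx; linarith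
      constructor
      · rcases mul_eq_zero.1 h1' with h | h
        · linarith
        · exact h
      · rcases mul_eq_zero.1 h2' with h | h
        · linarith
        · exact h
    -- densities constant on Ioo l t
    have hconst : ∀ x ∈ Set.Ioo l t, ∀ y ∈ Set.Ioo l t, ρ₁ x = ρ₁ y ∧ ρ₂ x = ρ₂ y := by
      have key : ∀ x ∈ Set.Ioo l t, ∀ y ∈ Set.Ioo l t, x ≤ y → ρ₁ x = ρ₁ y ∧ ρ₂ x = ρ₂ y := by
        intro x hx y hy hxy
        have hxI : x ∈ Set.Icc l r := ⟨le_of_lt hx.1, le_trans (le_of_lt hx.2) htr⟩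
        have hyI : y ∈ Set.Icc l r := ⟨le_of_lt hy.1, le_trans (le_of_lt hy.2) htr⟩
        have hd1' := hmono1 hxI hyI hxy
        have hd2' := hmono2 hxI hyI hxy
        have hgxy : g x = g y := by rw [hgc x hx, hgc y hy]
        simp only [hg_def] at hgxy
        constructor <;> nlinarith
      intro x hx y hy
      rcases le_total x y with h | h
      · exact key x hx y hy h
      · exact ⟨(key y hy x hx h).1.symm, (key y hy x hx h).2.symm⟩
    set m : ℝ := (l + t) / 2 with hm_def
    have hmI : m ∈ Set.Ioo l t := ⟨by simp only [hm_def]; linarith, by simp only [hm_def]; linarith⟩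
    have hexc : volume ({l, t, r} : Set ℝ) = 0 :=
      Set.Finite.measure_zero (Set.toFinite _) volume
    have key : ∀ ρ : ℝ → ℝ, (∀ x, 0 ≤ ρ x) → (∀ x ∉ Set.Icc l r, ρ x = 0) →
        (∀ x ∈ Set.Ioo t r, ρ x = 0) → (∀ x ∈ Set.Ioo l t, ρ x = ρ m) →
        IsProbabilityMeasure (volume.withDensity fun x => ENNReal.ofReal (ρ x)) →
        (ρ =ᵐ[volume] (Set.Icc l t).indicator fun _ => ρ m) ∧
          ENNReal.ofReal (ρ m) = (ENNReal.ofReal (t - l))⁻¹ := by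
      intro ρ h0 hout hzero hcst hprob
      have haeρ : ρ =ᵐ[volume] (Set.Icc l t).indicator fun _ => ρ m := by
        have hsub : {x | ρ x ≠ (Set.Icc l t).indicator (fun _ => ρ m) x} ⊆ ({l, t, r} : Set ℝ) := by
          intro x hx
          simp only [Set.mem_setOf_eq] at hx
          by_contra hmem
          simp only [Set.mem_insert_iff, Set.mem_singleton_iff, not_or] at hmem
          obtain ⟨hxl, hxt, hxr⟩ := hmem
          apply hx
          rcases lt_trichotomy x l with h | h | h
          · rw [hout x (fun hc => absurd hc.1 (not_le.2 h)),
              Set.indicator_of_notMem (fun hc => absurd hc.1 (not_le.2 h))]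
          · exact absurd h hxl
          · rcases lt_trichotomy x t with h' | h' | h'
            · rw [hcst x ⟨h, h'⟩, Set.indicator_of_mem (Set.mem_Icc.mpr ⟨le_of_lt h, le_of_lt h'⟩)]
            · exact absurd h' hxt
            · rw [Set.indicator_of_notMem (fun hc => absurd hc.2 (not_le.2 h'))]
              rcases lt_trichotomy x r with h'' | h'' | h''
              · exact hzero x ⟨h', h''⟩
              · exact absurd h'' hxr
              · exact hout x (fun hc => absurd hc.2 (not_le.2 h''))
        exact measure_mono_null hsub hexc
      refine ⟨haeρ, ?_⟩
      have hmass : ∫⁻ x, ENNReal.ofReal (ρ x) = 1 := mass_one hprob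
      have hind' : (fun x => ENNReal.ofReal ((Set.Icc l t).indicator (fun _ => ρ m) x))
          = (Set.Icc l t).indicator fun _ => ENNReal.ofReal (ρ m) := by
        ext x; by_cases hx : x ∈ Set.Icc l t <;> simp [hx]
      have hint : ∫⁻ x, ENNReal.ofReal (ρ x)
          = ENNReal.ofReal (ρ m) * ENNReal.ofReal (t - l) := by
        rw [lintegral_congr_ae (haeρ.mono fun x hx => by rw [hx])]
        rw [hind', lintegral_indicator measurableSet_Icc, setLIntegral_const,
          Real.volume_Icc]
      rw [hmass] at hint
      have hk : ENNReal.ofReal (t - l) ≠ 0 := by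
        simp only [ne_eq, ENNReal.ofReal_eq_zero, not_le]; linarith
      have hk' : ENNReal.ofReal (t - l) ≠ ⊤ := ENNReal.ofReal_ne_top
      calc ENNReal.ofReal (ρ m)
          = ENNReal.ofReal (ρ m) * (ENNReal.ofReal (t - l) * (ENNReal.ofReal (t - l))⁻¹) := by
            rw [ENNReal.mul_inv_cancel hk hk', mul_one]
        _ = (ENNReal.ofReal (ρ m) * ENNReal.ofReal (t - l)) * (ENNReal.ofReal (t - l))⁻¹ := by
            ring
        _ = (ENNReal.ofReal (t - l))⁻¹ := by rw [← hint, one_mul]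
    have hp1 : IsProbabilityMeasure (volume.withDensity fun x => ENNReal.ofReal (ρ₁ x)) := by
      rw [← heq1]; exact h1
    have hp2 : IsProbabilityMeasure (volume.withDensity fun x => ENNReal.ofReal (ρ₂ x)) := by
      rw [← heq2]; exact h2
    obtain ⟨hae1, hc1⟩ := key ρ₁ h01 hout1 (fun x hx => (hz1 x hx).1)
      (fun x hx => (hconst x hx m hmI).1) hp1
    obtain ⟨hae2, hc2⟩ := key ρ₂ h02 hout2 (fun x hx => (hz1 x hx).2)
      (fun x hx => (hconst x hx m hmI).2) hp2
    have hcc : ρ₁ m = ρ₂ m :=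
      (ENNReal.ofReal_eq_ofReal_iff (h01 m) (h02 m)).1 (hc1.trans hc2.symm)
    have hfinal : ρ₁ =ᵐ[volume] ρ₂ := by
      refine hae1.trans (Filter.EventuallyEq.trans ?_ hae2.symm)
      rw [hcc]
    rw [heq1, heq2]
    exact withDensity_congr_ae (hfinal.mono fun x hx => by dsimp only; rw [hx])

lemma eq_lam_of_ae_indicator {l t c : ℝ} (hlt : l < t) {μ : Measure ℝ}
    [hpm : IsProbabilityMeasure μ] {ρ : ℝ → ℝ}
    (hμ : μ = volume.withDensity fun x => ENNReal.ofReal (ρ x))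
    (hae : ρ =ᵐ[volume] (Set.Icc l t).indicator fun _ => c) : μ = lam l t := by
  have hμ2 : μ = ENNReal.ofReal c • volume.restrict (Set.Icc l t) := by
    have hae' : (fun x => ENNReal.ofReal (ρ x))
        =ᵐ[volume] fun x => ENNReal.ofReal ((Set.Icc l t).indicator (fun _ => c) x) :=
      hae.mono fun x hx => by simp only []; rw [hx]
    rw [hμ, withDensity_congr_ae hae', withDensity_indicator_const]
  have hmass : ENNReal.ofReal c * ENNReal.ofReal (t - l) = 1 := by
    have := hpm.measure_univ
    rw [hμ2, Measure.smul_apply, Measure.restrict_apply MeasurableSet.univ,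
      Set.univ_inter, Real.volume_Icc, smul_eq_mul] at this
    exact this
  have hk : ENNReal.ofReal (t - l) ≠ 0 := by
    simp only [ne_eq, ENNReal.ofReal_eq_zero, not_le]; linarith
  have hk' : ENNReal.ofReal (t - l) ≠ ⊤ := ENNReal.ofReal_ne_top
  have hc : ENNReal.ofReal c = (ENNReal.ofReal (t - l))⁻¹ := by
    calc ENNReal.ofReal c
        = ENNReal.ofReal c * (ENNReal.ofReal (t - l) * (ENNReal.ofReal (t - l))⁻¹) := by
          rw [ENNReal.mul_inv_cancel hk hk', mul_one]
      _ = (ENNReal.ofReal c * ENNReal.ofReal (t - l)) * (ENNReal.ofReal (t - l))⁻¹ := by ring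
      _ = (ENNReal.ofReal (t - l))⁻¹ := by rw [hmass, one_mul]
  rw [hμ2, hc, lam, if_pos hlt]

lemma extreme_to_lam {l r : ℝ} (hlr : l ≤ r) {μ : Measure ℝ} [hpm : IsProbabilityMeasure μ]
    (hmem : memD l r μ)
    (hext : ∀ μ₁ μ₂ : Measure ℝ, IsProbabilityMeasure μ₁ → IsProbabilityMeasure μ₂ →
      memD l r μ₁ → memD l r μ₂ → ∀ α : ℝ, 0 < α → α < 1 →
      μ = ENNReal.ofReal α • μ₁ + ENNReal.ofReal (1 - α) • μ₂ → μ₁ = μ₂) :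
    ∃ t ∈ Set.Icc l r, μ = lam l t := by
  obtain ⟨a, ha0, ha1, ρ, h0, hmono, hout, heqμ⟩ := hmem
  have hmeas := rho_measurable h0 hmono hout
  have htotal : ENNReal.ofReal a + ∫⁻ x, ENNReal.ofReal (ρ x) = 1 := by
    have := hpm.measure_univ
    rw [heqμ, Measure.add_apply, Measure.smul_apply,
      Measure.dirac_apply' _ MeasurableSet.univ, withDensity_apply _ MeasurableSet.univ,
      setLIntegral_univ] at this
    simpa using this
  rcases eq_or_lt_of_le ha1 with ha1' | ha1'
  · -- a = 1 : μ = dirac l = lam l l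
    refine ⟨l, ⟨le_refl l, hlr⟩, ?_⟩
    rw [ha1', ENNReal.ofReal_one] at htotal
    have hz : ∫⁻ x, ENNReal.ofReal (ρ x) = 0 := by
      have : (1 : ℝ≥0∞) + ∫⁻ x, ENNReal.ofReal (ρ x) = 1 + 0 := by rw [add_zero]; exact htotal
      exact (ENNReal.add_right_inj ENNReal.one_ne_top).1 this
    have hwd0 : volume.withDensity (fun x => ENNReal.ofReal (ρ x)) = 0 := by
      apply Measure.measure_univ_eq_zero.1
      rw [withDensity_apply _ MeasurableSet.univ, setLIntegral_univ]
      exact hz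
    rw [heqμ, hwd0, add_zero, ha1', ENNReal.ofReal_one, one_smul, lam, if_neg (lt_irrefl l)]
  rcases eq_or_lt_of_le ha0 with ha0' | ha0'
  · -- a = 0 : main case
    have heq' : μ = volume.withDensity fun x => ENNReal.ofReal (ρ x) := by
      rw [heqμ, ← ha0', ENNReal.ofReal_zero, zero_smul, zero_add]
    have hA : ∫⁻ x, ENNReal.ofReal (ρ x) = 1 := by
      rw [← ha0', ENNReal.ofReal_zero, zero_add] at htotal; exact htotal
    have hsupp : 0 < volume (Function.support fun x => ENNReal.ofReal (ρ x)) := by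
      rw [← lintegral_pos_iff_support hmeas.ennreal_ofReal, hA]; exact zero_lt_one
    obtain ⟨s, hs0, hsE⟩ : ∃ s : ℝ, 0 < s ∧ 0 < volume {x | s < ρ x} := by
      by_contra hcon
      push_neg at hcon
      have hnull : volume (⋃ n : ℕ, {x | 1 / ((n : ℝ) + 1) < ρ x}) = 0 :=
        measure_iUnion_null fun n => le_antisymm (hcon _ (by positivity)) zero_le
      have hsub : (Function.support fun x => ENNReal.ofReal (ρ x))
          ⊆ ⋃ n : ℕ, {x | 1 / ((n : ℝ) + 1) < ρ x} := by
        intro x hx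
        have hx' : 0 < ρ x := by
          rcases lt_or_eq_of_le (h0 x) with h | h
          · exact h
          · exfalso; apply hx; simp [← h]
        obtain ⟨n, hn⟩ := exists_nat_one_div_lt hx'
        exact Set.mem_iUnion.2 ⟨n, hn⟩
      rw [measure_mono_null hsub hnull] at hsupp
      exact lt_irrefl 0 hsupp
    have hm0 : ∀ x, 0 ≤ min (ρ x) s := fun x => le_min (h0 x) (le_of_lt hs0)
    have hgg0 : ∀ x, 0 ≤ ρ x - min (ρ x) s := fun x => sub_nonneg.2 (min_le_left _ _)
    have hmmeas : Measurable fun x => min (ρ x) s := hmeas.min measurable_const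
    have hggmeas : Measurable fun x => ρ x - min (ρ x) s := hmeas.sub hmmeas
    set A := ∫⁻ x, ENNReal.ofReal (min (ρ x) s) with hA_def
    set B := ∫⁻ x, ENNReal.ofReal (ρ x - min (ρ x) s) with hB_def
    have hptw : ∀ x, ENNReal.ofReal (min (ρ x) s) + ENNReal.ofReal (ρ x - min (ρ x) s)
        = ENNReal.ofReal (ρ x) := fun x => by
      rw [← ENNReal.ofReal_add (hm0 x) (hgg0 x)]; congr 1; ring
    have hAB : A + B = 1 := by
      rw [hA_def, hB_def, ← lintegral_add_left hmmeas.ennreal_ofReal, ← hA]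
      exact lintegral_congr hptw
    have hAne_top : A ≠ ⊤ := by
      intro hc; rw [hc, top_add] at hAB; exact ENNReal.top_ne_one hAB
    have hBne_top : B ≠ ⊤ := by
      intro hc; rw [hc, add_top] at hAB; exact ENNReal.top_ne_one hAB
    have hApos : 0 < A := by
      rw [hA_def, lintegral_pos_iff_support hmmeas.ennreal_ofReal]
      refine lt_of_lt_of_le hsE (measure_mono ?_)
      intro x hx
      have : min (ρ x) s = s := min_eq_right (le_of_lt hx)
      simp only [Function.mem_support, ne_eq, ENNReal.ofReal_eq_zero, not_le, this]
      exact hs0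
    have hBpos : 0 < B := by
      rw [hB_def, lintegral_pos_iff_support hggmeas.ennreal_ofReal]
      refine lt_of_lt_of_le hsE (measure_mono ?_)
      intro x hx
      have : min (ρ x) s = s := min_eq_right (le_of_lt hx)
      simp only [Function.mem_support, ne_eq, ENNReal.ofReal_eq_zero, not_le, this]
      have : (s : ℝ) < ρ x := hx
      linarith
    set a' := A.toReal with ha'_def
    set b' := B.toReal with hb'_def
    have ha'pos : 0 < a' := ENNReal.toReal_pos (ne_of_gt hApos) hAne_top
    have hb'pos : 0 < b' := ENNReal.toReal_pos (ne_of_gt hBpos) hBne_top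
    have hab' : a' + b' = 1 := by
      rw [ha'_def, hb'_def, ← ENNReal.toReal_add hAne_top hBne_top, hAB, ENNReal.toReal_one]
    have hofA : ENNReal.ofReal a' = A := ENNReal.ofReal_toReal hAne_top
    have hofB : ENNReal.ofReal b' = B := ENNReal.ofReal_toReal hBne_top
    set μ₁ : Measure ℝ := volume.withDensity fun x => ENNReal.ofReal (a'⁻¹ * min (ρ x) s)
      with hμ₁_def
    set μ₂ : Measure ℝ := volume.withDensity
      fun x => ENNReal.ofReal (b'⁻¹ * (ρ x - min (ρ x) s)) with hμ₂_def
    have hmass1 : ∫⁻ x, ENNReal.ofReal (a'⁻¹ * min (ρ x) s) = 1 := by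
      have hp : ∀ x, ENNReal.ofReal (a'⁻¹ * min (ρ x) s)
          = ENNReal.ofReal a'⁻¹ * ENNReal.ofReal (min (ρ x) s) := fun x =>
        ENNReal.ofReal_mul (le_of_lt (inv_pos.2 ha'pos))
      rw [lintegral_congr hp, lintegral_const_mul _ hmmeas.ennreal_ofReal, ← hA_def,
        ENNReal.ofReal_inv_of_pos ha'pos, hofA,
        ENNReal.inv_mul_cancel (ne_of_gt hApos) hAne_top]
    have hmass2 : ∫⁻ x, ENNReal.ofReal (b'⁻¹ * (ρ x - min (ρ x) s)) = 1 := by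
      have hp : ∀ x, ENNReal.ofReal (b'⁻¹ * (ρ x - min (ρ x) s))
          = ENNReal.ofReal b'⁻¹ * ENNReal.ofReal (ρ x - min (ρ x) s) := fun x =>
        ENNReal.ofReal_mul (le_of_lt (inv_pos.2 hb'pos))
      rw [lintegral_congr hp, lintegral_const_mul _ hggmeas.ennreal_ofReal, ← hB_def,
        ENNReal.ofReal_inv_of_pos hb'pos, hofB,
        ENNReal.inv_mul_cancel (ne_of_gt hBpos) hBne_top]
    have hprob1 : IsProbabilityMeasure μ₁ := by
      constructor
      rw [hμ₁_def, withDensity_apply _ MeasurableSet.univ, setLIntegral_univ]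
      exact hmass1
    have hprob2 : IsProbabilityMeasure μ₂ := by
      constructor
      rw [hμ₂_def, withDensity_apply _ MeasurableSet.univ, setLIntegral_univ]
      exact hmass2
    have hmem1 : memD l r μ₁ := by
      refine ⟨0, le_refl 0, zero_le_one, fun x => a'⁻¹ * min (ρ x) s, ?_, ?_, ?_, ?_⟩
      · intro x; exact mul_nonneg (le_of_lt (inv_pos.2 ha'pos)) (hm0 x)
      · intro x hx y hy hxy
        exact mul_le_mul_of_nonneg_left (min_le_min (hmono hx hy hxy) (le_refl s))
          (le_of_lt (inv_pos.2 ha'pos))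
      · intro x hx
        show a'⁻¹ * min (ρ x) s = 0
        rw [hout x hx, min_eq_left (le_of_lt hs0), mul_zero]
      · rw [ENNReal.ofReal_zero, zero_smul, zero_add]
    have hgg_mono : ∀ u v : ℝ, u ≤ v → u - min u s ≤ v - min v s := by
      intro u v huv
      rcases le_total u s with h | h
      · rw [min_eq_left h, sub_self]
        exact sub_nonneg.2 (min_le_left v s)
      · rw [min_eq_right h, min_eq_right (le_trans h huv)]
        linarith
    have hmem2 : memD l r μ₂ := by
      refine ⟨0, le_refl 0, zero_le_one, fun x => b'⁻¹ * (ρ x - min (ρ x) s), ?_, ?_, ?_, ?_⟩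
      · intro x; exact mul_nonneg (le_of_lt (inv_pos.2 hb'pos)) (hgg0 x)
      · intro x hx y hy hxy
        exact mul_le_mul_of_nonneg_left (hgg_mono _ _ (hmono hx hy hxy))
          (le_of_lt (inv_pos.2 hb'pos))
      · intro x hx
        show b'⁻¹ * (ρ x - min (ρ x) s) = 0
        rw [hout x hx, min_eq_left (le_of_lt hs0), sub_self, mul_zero]
      · rw [ENNReal.ofReal_zero, zero_smul, zero_add]
    have hsm1 : ENNReal.ofReal a' • μ₁
        = volume.withDensity fun x => ENNReal.ofReal (min (ρ x) s) := by
      rw [hμ₁_def, smul_withDensity_combo (le_of_lt ha'pos) (show Measurable fun x => a'⁻¹ * min (ρ x) s from measurable_const.mul hmmeas)]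
      congr 1
      ext x
      congr 1
      field_simp
    have hsm2 : ENNReal.ofReal b' • μ₂
        = volume.withDensity fun x => ENNReal.ofReal (ρ x - min (ρ x) s) := by
      rw [hμ₂_def, smul_withDensity_combo (le_of_lt hb'pos) (show Measurable fun x => b'⁻¹ * (ρ x - min (ρ x) s) from measurable_const.mul hggmeas)]
      congr 1
      ext x
      congr 1
      field_simp
    have hdecomp : μ = ENNReal.ofReal a' • μ₁ + ENNReal.ofReal (1 - a') • μ₂ := by
      rw [show (1 : ℝ) - a' = b' by linarith, hsm1, hsm2, heq',
        ← withDensity_add_left hmmeas.ennreal_ofReal]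
      exact (withDensity_congr_ae (Filter.Eventually.of_forall
        fun x => (hptw x).symm)).symm ▸ rfl
    have hμeq := hext μ₁ μ₂ hprob1 hprob2 hmem1 hmem2 a' ha'pos (by linarith) hdecomp
    have haeE : (fun x => ENNReal.ofReal (a'⁻¹ * min (ρ x) s))
        =ᵐ[volume] fun x => ENNReal.ofReal (b'⁻¹ * (ρ x - min (ρ x) s)) := by
      rw [← withDensity_eq_iff_of_sigmaFinite
        (show Measurable fun x => a'⁻¹ * min (ρ x) s from measurable_const.mul hmmeas).ennreal_ofReal.aemeasurable
        (show Measurable fun x => b'⁻¹ * (ρ x - min (ρ x) s) from measurable_const.mul hggmeas).ennreal_ofReal.aemeasurable]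
      rw [← hμ₁_def, ← hμ₂_def]
      exact hμeq
    have haeR : ∀ᵐ x, a'⁻¹ * min (ρ x) s = b'⁻¹ * (ρ x - min (ρ x) s) := by
      filter_upwards [haeE] with x hx
      exact (ENNReal.ofReal_eq_ofReal_iff
        (mul_nonneg (le_of_lt (inv_pos.2 ha'pos)) (hm0 x))
        (mul_nonneg (le_of_lt (inv_pos.2 hb'pos)) (hgg0 x))).1 hx
    set c : ℝ := s / a' with hc_def
    have hsc : s < c := by
      rw [hc_def, lt_div_iff₀ ha'pos]
      nlinarith
    have hdich : ∀ᵐ x, ρ x = 0 ∨ ρ x = c := by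
      filter_upwards [haeR] with x hx
      rcases le_or_gt (ρ x) s with h | h
      · left
        rw [min_eq_left h, sub_self, mul_zero] at hx
        rcases mul_eq_zero.1 hx with h' | h'
        · exact absurd h' (ne_of_gt (inv_pos.2 ha'pos))
        · exact h'
      · right
        rw [min_eq_right (le_of_lt h)] at hx
        have h1 : ρ x - s = b' * (a'⁻¹ * s) := by
          rw [← mul_inv_cancel_left₀ (ne_of_gt hb'pos) (ρ x - s), ← hx]
        have h2 : a' * ρ x = s := by
          have h3 : a' * (ρ x - s) = a' * (b' * (a'⁻¹ * s)) := by rw [h1]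
          rw [show a' * (b' * (a'⁻¹ * s)) = b' * s * (a' * a'⁻¹) by ring,
            mul_inv_cancel₀ (ne_of_gt ha'pos), mul_one] at h3
          nlinarith
        rw [hc_def, eq_div_iff (ne_of_gt ha'pos)]
        linarith
    set E : Set ℝ := {x | s < ρ x} with hE_def
    have hEsub : E ⊆ Set.Icc l r := by
      intro x hx
      by_contra h
      rw [hE_def, Set.mem_setOf_eq, hout x h] at hx
      exact absurd hx (not_lt.2 (le_of_lt hs0))
    have hEne : E.Nonempty := nonempty_of_measure_ne_zero (ne_of_gt hsE)
    have hbdd : BddAbove E := BddAbove.mono hEsub bddAbove_Icc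
    set t : ℝ := sSup E with ht_def
    have htr : t ≤ r := csSup_le hEne fun x hx => (hEsub hx).2
    have hlE : ∀ x ∈ E, l ≤ x := fun x hx => (hEsub hx).1
    have hEt : ∀ x ∈ E, x ≤ t := fun x hx => le_csSup hbdd hx
    have hlt : l < t := by
      have hEI : E ⊆ Set.Icc l t := fun x hx => ⟨hlE x hx, hEt x hx⟩
      have h1 := lt_of_lt_of_le hsE (measure_mono hEI)
      rw [Real.volume_Icc] at h1
      have := ENNReal.ofReal_pos.1 h1
      linarith
    have hIco : Set.Ico l t ⊆ E := by
      intro x hx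
      obtain ⟨y, hyE, hxy⟩ := exists_lt_of_lt_csSup hEne hx.2
      have hyI := hEsub hyE
      have hxI : x ∈ Set.Icc l r := ⟨hx.1, le_trans (le_of_lt hxy) hyI.2⟩
      exact lt_of_lt_of_le hyE (hmono hxI hyI (le_of_lt hxy))
    have ht_ae : ∀ᵐ x : ℝ, x ≠ t := by
      rw [ae_iff]
      simp only [not_not, Set.setOf_eq_eq_singleton]
      exact Real.volume_singleton
    have haeind : ρ =ᵐ[volume] (Set.Icc l t).indicator fun _ => c := by
      filter_upwards [hdich, ht_ae] with x hx hxt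
      by_cases hxm : x ∈ Set.Icc l t
      · rw [Set.indicator_of_mem hxm]
        have hxE : x ∈ E := hIco ⟨hxm.1, lt_of_le_of_ne hxm.2 hxt⟩
        rcases hx with h | h
        · exfalso
          rw [hE_def, Set.mem_setOf_eq, h] at hxE
          exact absurd hxE (not_lt.2 (le_of_lt hs0))
        · exact h
      · rw [Set.indicator_of_notMem hxm]
        have hxE : x ∉ E := fun hc => hxm ⟨hlE x hc, hEt x hc⟩
        rcases hx with h | h
        · exact h
        · exfalso
          apply hxE
          rw [hE_def, Set.mem_setOf_eq, h]
          exact hsc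
    exact ⟨t, ⟨le_of_lt hlt, htr⟩, eq_lam_of_ae_indicator hlt heq' haeind⟩
  · -- 0 < a < 1 : contradiction
    exfalso
    have hA : ∫⁻ x, ENNReal.ofReal (ρ x) = ENNReal.ofReal (1 - a) := by
      have h1 : ENNReal.ofReal a + ∫⁻ x, ENNReal.ofReal (ρ x)
          = ENNReal.ofReal a + ENNReal.ofReal (1 - a) := by
        rw [htotal, ← ENNReal.ofReal_add (le_of_lt ha0') (by linarith)]
        norm_num
      exact (ENNReal.add_right_inj ENNReal.ofReal_ne_top).1 h1
    set σ : ℝ → ℝ := fun x => (1 - a)⁻¹ * ρ x with hσ_def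
    have hσmeas : Measurable σ := measurable_const.mul hmeas
    have h1a : (0:ℝ) < 1 - a := by linarith
    set μ₂ : Measure ℝ := volume.withDensity fun x => ENNReal.ofReal (σ x) with hμ₂_def
    have hmass2 : ∫⁻ x, ENNReal.ofReal (σ x) = 1 := by
      have : ∀ x, ENNReal.ofReal (σ x) = ENNReal.ofReal (1 - a)⁻¹ * ENNReal.ofReal (ρ x) := by
        intro x; rw [hσ_def, ENNReal.ofReal_mul (le_of_lt (inv_pos.2 h1a))]
      rw [lintegral_congr this, lintegral_const_mul _ hmeas.ennreal_ofReal, hA,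
        ← ENNReal.ofReal_mul (le_of_lt (inv_pos.2 h1a)), inv_mul_cancel₀ (ne_of_gt h1a),
        ENNReal.ofReal_one]
    have hprob2 : IsProbabilityMeasure μ₂ := by
      constructor
      rw [hμ₂_def, withDensity_apply _ MeasurableSet.univ, setLIntegral_univ]
      exact hmass2
    have hmem1 : memD l r (Measure.dirac l) := by
      refine ⟨1, zero_le_one, le_refl 1, fun _ => 0, fun x => le_refl 0,
        fun x _ y _ _ => le_refl 0, fun x _ => rfl, ?_⟩
      simp [withDensity_zero]
    have hmem2 : memD l r μ₂ := by
      refine ⟨0, le_refl 0, zero_le_one, σ, ?_, ?_, ?_, ?_⟩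
      · intro x; exact mul_nonneg (le_of_lt (inv_pos.2 h1a)) (h0 x)
      · intro x hx y hy hxy
        exact mul_le_mul_of_nonneg_left (hmono hx hy hxy) (le_of_lt (inv_pos.2 h1a))
      · intro x hx; rw [hσ_def]; simp [hout x hx]
      · rw [ENNReal.ofReal_zero, zero_smul, zero_add]
    have hdecomp : μ = ENNReal.ofReal a • Measure.dirac l + ENNReal.ofReal (1 - a) • μ₂ := by
      rw [heqμ, hμ₂_def, smul_withDensity_combo (by linarith : (0:ℝ) ≤ 1 - a) hσmeas]
      congr 2
      ext x
      rw [hσ_def]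
      congr 1
      field_simp
    have := hext (Measure.dirac l) μ₂ (by infer_instance) hprob2 hmem1 hmem2 a ha0' ha1' hdecomp
    have h1' : (Measure.dirac l : Measure ℝ) {l} = 1 := by
      rw [Measure.dirac_apply' _ (measurableSet_singleton l)]; simp
    have h2' : μ₂ {l} = 0 := by
      rw [hμ₂_def, withDensity_apply _ (measurableSet_singleton l)]
      exact setLIntegral_measure_zero _ _ Real.volume_singleton
    rw [this, h2'] at h1'
    exact zero_ne_one h1'

/-- a probability measure μ is an extreme point of D[l,r] iff μ = λ[l,t] for
some t ∈ [l,r]. -/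
theorem stmt7 (l r : ℝ) (hlr : l ≤ r) (μ : Measure ℝ) [IsProbabilityMeasure μ] :
    (memD l r μ ∧
      ∀ (μ₁ μ₂ : Measure ℝ), IsProbabilityMeasure μ₁ → IsProbabilityMeasure μ₂ →
        memD l r μ₁ → memD l r μ₂ → ∀ α : ℝ, 0 < α → α < 1 →
        μ = ENNReal.ofReal α • μ₁ + ENNReal.ofReal (1 - α) • μ₂ → μ₁ = μ₂)
    ↔ ∃ t ∈ Set.Icc l r, μ = lam l t := by
  constructor
  · rintro ⟨hmem, hext⟩
    exact extreme_to_lam hlr hmem hext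
  · rintro ⟨t, ht, hμ⟩
    constructor
    · rw [hμ]; exact lam_memD hlr ht
    · intro μ₁ μ₂ p1 p2 d1 d2 α hα0 hα1 heq
      exact lam_extreme hlr ht μ₁ μ₂ p1 p2 d1 d2 α hα0 hα1 (hμ.symm.trans heq)
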